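/- Any bipartite Gleason correlation is quantum: if W is an entanglement witness (Hermitian, trace one, positive on all product states) on H_A ⊗ H_B, and {M^{x_1}_{a_1}}, {M^{x_2}_{a_2}} are local POVMs, then there exist a quantum state |Ψ⟩ and local POVMs {M^{x_1}_{a_1}}, {M̃^{x_2}_{a_2}} such that tr(W M^{x_1}_{a_1} ⊗ M^{x_2}_{a_2}) = ⟨Ψ| M^{x_1}_{a_1} ⊗ M̃^{x_2}_{a_2} |Ψ⟩ for all inputs and outcomes. -/

import Mathlib

open ComplexOrder Matrix

/-- The tensor (Kronecker) product of two `d × d` matrices, as a matrix on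
`ℂ^d ⊗ ℂ^d`. -/
def tens2 {d : ℕ} (A B : Matrix (Fin d) (Fin d) ℂ) :
    Matrix (Fin d × Fin d) (Fin d × Fin d) ℂ :=
  Matrix.of fun p q => A p.1 q.1 * B p.2 q.2

namespace GleasonAux

open scoped MatrixOrder

variable {d : ℕ}

/-! ### Functional calculus for a Hermitian matrix -/

noncomputable def fc {A : Matrix (Fin d) (Fin d) ℂ} (hA : A.IsHermitian) (f : ℝ → ℝ) :
    Matrix (Fin d) (Fin d) ℂ :=
  (hA.eigenvectorUnitary : Matrix (Fin d) (Fin d) ℂ) *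
    diagonal (fun i => (f (hA.eigenvalues i) : ℂ)) *
    star (hA.eigenvectorUnitary : Matrix (Fin d) (Fin d) ℂ)

lemma fc_mul {A : Matrix (Fin d) (Fin d) ℂ} (hA : A.IsHermitian) (f g h : ℝ → ℝ)
    (hfg : ∀ i, f (hA.eigenvalues i) * g (hA.eigenvalues i) = h (hA.eigenvalues i)) :
    fc hA f * fc hA g = fc hA h := by
  have hU : star (hA.eigenvectorUnitary : Matrix (Fin d) (Fin d) ℂ) *
      (hA.eigenvectorUnitary : Matrix (Fin d) (Fin d) ℂ) = 1 :=
    Matrix.mem_unitaryGroup_iff'.mp (hA.eigenvectorUnitary).2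
  have hd : (diagonal (fun i => (f (hA.eigenvalues i) : ℂ))) *
      (diagonal (fun i => (g (hA.eigenvalues i) : ℂ))) =
      diagonal (fun i => (h (hA.eigenvalues i) : ℂ)) := by
    rw [diagonal_mul_diagonal]
    exact congrArg diagonal (funext fun i => by exact_mod_cast hfg i)
  unfold fc
  simp only [Matrix.mul_assoc]
  rw [← Matrix.mul_assoc (star _) _, hU, Matrix.one_mul,
    ← Matrix.mul_assoc (diagonal _) (diagonal _), hd]

lemma fc_add {A : Matrix (Fin d) (Fin d) ℂ} (hA : A.IsHermitian) (f g h : ℝ → ℝ)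
    (hfg : ∀ i, f (hA.eigenvalues i) + g (hA.eigenvalues i) = h (hA.eigenvalues i)) :
    fc hA f + fc hA g = fc hA h := by
  have hd : (fun i => ((f (hA.eigenvalues i) : ℂ) + (g (hA.eigenvalues i) : ℂ))) =
      fun i => (h (hA.eigenvalues i) : ℂ) :=
    funext fun i => by exact_mod_cast hfg i
  unfold fc
  rw [← Matrix.add_mul, ← Matrix.mul_add, diagonal_add, hd]

lemma fc_id {A : Matrix (Fin d) (Fin d) ℂ} (hA : A.IsHermitian) :
    fc hA (fun x => x) = A := by
  conv_rhs => rw [hA.spectral_theorem]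
  rfl

lemma fc_one {A : Matrix (Fin d) (Fin d) ℂ} (hA : A.IsHermitian) :
    fc hA (fun _ => 1) = 1 := by
  unfold fc
  simpa using Matrix.mem_unitaryGroup_iff.mp (hA.eigenvectorUnitary).2

lemma fc_zero {A : Matrix (Fin d) (Fin d) ℂ} (hA : A.IsHermitian) :
    fc hA (fun _ => 0) = 0 := by
  unfold fc
  simp

lemma fc_herm {A : Matrix (Fin d) (Fin d) ℂ} (hA : A.IsHermitian) (f : ℝ → ℝ) :
    (fc hA f).IsHermitian := by
  have hdiag : (diagonal (fun i => (f (hA.eigenvalues i) : ℂ)))ᴴ =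
      diagonal (fun i => (f (hA.eigenvalues i) : ℂ)) := by
    rw [diagonal_conjTranspose]
    exact congrArg diagonal (funext fun i => by simp [Complex.conj_ofReal])
  show (fc hA f)ᴴ = fc hA f
  unfold fc
  rw [Matrix.star_eq_conjTranspose, conjTranspose_mul, conjTranspose_mul, hdiag,
    conjTranspose_conjTranspose, Matrix.mul_assoc]

lemma fc_psd {A : Matrix (Fin d) (Fin d) ℂ} (hA : A.IsHermitian) (f : ℝ → ℝ)
    (hf : ∀ i, 0 ≤ f (hA.eigenvalues i)) : (fc hA f).PosSemidef := by
  unfold fc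
  rw [Matrix.star_eq_conjTranspose]
  have hD : PosSemidef (diagonal (fun i => (f (hA.eigenvalues i) : ℂ))) := by
    refine Matrix.PosSemidef.diagonal ?_
    intro i
    simp only [Pi.zero_apply]
    exact_mod_cast hf i
  exact hD.mul_mul_conjTranspose_same _

/-! ### The dual map on Bob's side -/

noncomputable def NB (W : Matrix (Fin d × Fin d) (Fin d × Fin d) ℂ)
    (B : Matrix (Fin d) (Fin d) ℂ) : Matrix (Fin d) (Fin d) ℂ :=
  Matrix.of fun i k => ∑ j, ∑ l, W (i, j) (k, l) * B l j

lemma trace_eq (W : Matrix (Fin d × Fin d) (Fin d × Fin d) ℂ)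
    (A B : Matrix (Fin d) (Fin d) ℂ) :
    (W * tens2 A B).trace = (A * NB W B).trace := by
  simp only [trace, Matrix.mul_apply, tens2, NB, Matrix.of_apply, diag_apply,
    Fintype.sum_prod_type, Finset.mul_sum, Finset.sum_mul]
  conv_rhs => rw [Finset.sum_comm]
  refine Finset.sum_congr rfl fun i _ => ?_
  conv_rhs => rw [Finset.sum_comm]
  refine Finset.sum_congr rfl fun j _ => ?_
  refine Finset.sum_congr rfl fun k _ => ?_
  refine Finset.sum_congr rfl fun l _ => ?_
  ring

lemma NB_one_trace (W : Matrix (Fin d × Fin d) (Fin d × Fin d) ℂ) :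
    (NB W 1).trace = W.trace := by
  simp only [trace, NB, Matrix.of_apply, diag_apply, Fintype.sum_prod_type, Matrix.one_apply]
  simp [Finset.sum_ite_eq, Finset.mul_sum]

lemma NB_add (W : Matrix (Fin d × Fin d) (Fin d × Fin d) ℂ)
    (B C : Matrix (Fin d) (Fin d) ℂ) : NB W (B + C) = NB W B + NB W C := by
  ext i k
  simp [NB, mul_add, Finset.sum_add_distrib]

lemma NB_sum {ι : Type} [Fintype ι] (W : Matrix (Fin d × Fin d) (Fin d × Fin d) ℂ)
    (B : ι → Matrix (Fin d) (Fin d) ℂ) : NB W (∑ a, B a) = ∑ a, NB W (B a) := by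
  ext i k
  simp only [NB, Matrix.of_apply, Finset.sum_apply, Matrix.sum_apply, Finset.mul_sum]
  exact (Finset.sum_congr rfl fun j _ => Finset.sum_comm).trans Finset.sum_comm

lemma NB_herm (W : Matrix (Fin d × Fin d) (Fin d × Fin d) ℂ) (hherm : W.IsHermitian)
    (B : Matrix (Fin d) (Fin d) ℂ) (hB : B.IsHermitian) : (NB W B).IsHermitian := by
  ext i k
  simp only [conjTranspose_apply, NB, Matrix.of_apply, star_sum, star_mul']
  refine (Finset.sum_congr rfl fun j _ => Finset.sum_congr rfl fun l _ => ?_).trans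
    Finset.sum_comm
  rw [hherm.apply, hB.apply]

lemma sum5 {ι : Type} [Fintype ι] (f : Fin d → Fin d → Fin d → Fin d → ι → ℂ) :
    ∑ i, ∑ k, ∑ j, ∑ l, ∑ m, f i k j l m = ∑ m, ∑ i, ∑ k, ∑ j, ∑ l, f i k j l m := by
  refine (Finset.sum_congr rfl fun i _ => Finset.sum_congr rfl fun k _ =>
    Finset.sum_congr rfl fun j _ => Finset.sum_comm).trans ?_
  refine (Finset.sum_congr rfl fun i _ => Finset.sum_congr rfl fun k _ =>
    Finset.sum_comm).trans ?_
  refine (Finset.sum_congr rfl fun i _ => Finset.sum_comm).trans ?_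
  exact Finset.sum_comm

set_option maxHeartbeats 1600000 in
lemma NB_psd (W : Matrix (Fin d × Fin d) (Fin d × Fin d) ℂ) (hherm : W.IsHermitian)
    (hq : ∀ ψ φ : Fin d → ℂ,
      0 ≤ star (fun p : Fin d × Fin d => ψ p.1 * φ p.2) ⬝ᵥ
        W *ᵥ (fun p : Fin d × Fin d => ψ p.1 * φ p.2))
    (B : Matrix (Fin d) (Fin d) ℂ) (hB : B.PosSemidef) : (NB W B).PosSemidef := by
  refine Matrix.PosSemidef.of_dotProduct_mulVec_nonneg (NB_herm W hherm B hB.1) fun x => ?_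
  obtain ⟨C, hC⟩ := CStarAlgebra.nonneg_iff_eq_star_mul_self.mp (Matrix.nonneg_iff_posSemidef.mpr hB)
  rw [star_eq_conjTranspose] at hC
  have step1 : star x ⬝ᵥ (NB W B) *ᵥ x =
      ∑ i, ∑ k, ∑ j, ∑ l, ∑ m,
        star (x i) * W (i, j) (k, l) * star (C m l) * C m j * x k := by
    rw [hC]
    simp only [dotProduct, mulVec, NB, Matrix.of_apply, Matrix.mul_apply,
      conjTranspose_apply, Pi.star_apply, Finset.mul_sum, Finset.sum_mul]
    refine Finset.sum_congr rfl fun i _ => Finset.sum_congr rfl fun k _ =>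
      Finset.sum_congr rfl fun j _ => Finset.sum_congr rfl fun l _ =>
      Finset.sum_congr rfl fun m _ => ?_
    ring
  have step3 : ∀ m, star (fun p : Fin d × Fin d => x p.1 * star (C m p.2)) ⬝ᵥ
        W *ᵥ (fun p : Fin d × Fin d => x p.1 * star (C m p.2)) =
      ∑ i, ∑ k, ∑ j, ∑ l,
        star (x i) * W (i, j) (k, l) * star (C m l) * C m j * x k := by
    intro m
    simp only [dotProduct, mulVec, Pi.star_apply, Fintype.sum_prod_type,
      Finset.mul_sum, Finset.sum_mul]
    refine Finset.sum_congr rfl fun i _ => ?_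
    refine Finset.sum_comm.trans ?_
    refine Finset.sum_congr rfl fun k _ => Finset.sum_congr rfl fun j _ =>
      Finset.sum_congr rfl fun l _ => ?_
    rw [star_mul', star_star]
    ring
  rw [step1, sum5]
  refine Finset.sum_nonneg fun m _ => ?_
  rw [← step3 m]
  exact hq x (fun t => star (C m t))

/-! ### The pure state -/

lemma state_eq (S A C : Matrix (Fin d) (Fin d) ℂ) (hS : S.IsHermitian) :
    star (fun p : Fin d × Fin d => S p.1 p.2) ⬝ᵥ
      (tens2 A C) *ᵥ (fun p : Fin d × Fin d => S p.1 p.2) =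
    (S * A * S * Cᵀ).trace := by
  simp only [dotProduct, mulVec, tens2, Matrix.of_apply, Pi.star_apply, trace,
    diag_apply, Matrix.mul_apply, transpose_apply, Fintype.sum_prod_type,
    Finset.mul_sum, Finset.sum_mul]
  refine Finset.sum_comm.trans (Finset.sum_congr rfl fun j _ => ?_)
  refine Finset.sum_comm.trans ?_
  refine (Finset.sum_congr rfl fun k _ => Finset.sum_comm).trans ?_
  refine Finset.sum_comm.trans ?_
  refine Finset.sum_congr rfl fun l _ => Finset.sum_congr rfl fun k _ =>
    Finset.sum_congr rfl fun i _ => ?_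
  rw [hS.apply j i]
  ring

lemma norm_eq (S : Matrix (Fin d) (Fin d) ℂ) (hS : S.IsHermitian) :
    star (fun p : Fin d × Fin d => S p.1 p.2) ⬝ᵥ (fun p : Fin d × Fin d => S p.1 p.2) =
    (S * S).trace := by
  simp only [dotProduct, Pi.star_apply, trace, diag_apply, Matrix.mul_apply,
    Fintype.sum_prod_type]
  refine Finset.sum_comm.trans (Finset.sum_congr rfl fun j _ =>
    Finset.sum_congr rfl fun i _ => ?_)
  rw [hS.apply]

/-! ### Misc positivity facts -/

lemma psd_smul {X : Matrix (Fin d) (Fin d) ℂ} (hX : X.PosSemidef) {c : ℂ} (hc : 0 ≤ c) :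
    (c • X).PosSemidef := by
  refine Matrix.PosSemidef.of_dotProduct_mulVec_nonneg ?_ ?_
  · have hcr : star c = c := by
      rw [Complex.star_def, Complex.conj_eq_iff_im]
      exact ((Complex.le_def.mp hc).2).symm
    rw [IsHermitian, conjTranspose_smul, hX.1, hcr]
  · intro x
    rw [smul_mulVec, dotProduct_smul, smul_eq_mul]
    exact mul_nonneg hc (hX.dotProduct_mulVec_nonneg x)

lemma psd_trace_nonneg {X : Matrix (Fin d) (Fin d) ℂ} (hX : X.PosSemidef) :
    0 ≤ X.trace := by
  refine Finset.sum_nonneg fun i _ => ?_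
  have := hX.dotProduct_mulVec_nonneg (Pi.single i 1)
  simpa [dotProduct, mulVec, Pi.single_apply, Finset.sum_ite_eq] using this

lemma psd_sum {ι : Type} [Fintype ι] {B : ι → Matrix (Fin d) (Fin d) ℂ}
    (hB : ∀ a, (B a).PosSemidef) (s : Finset ι) : (∑ a ∈ s, B a).PosSemidef := by
  classical
  induction s using Finset.induction with
  | empty => simpa using Matrix.PosSemidef.zero
  | insert _ _ h ih => rw [Finset.sum_insert h]; exact (hB _).add ih

/-- If `0 ≤ X`, `0 ≤ ρ - X` and `ρ * Q = 0`, then `X * Q = 0`. -/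
lemma support_lemma {X ρ Q : Matrix (Fin d) (Fin d) ℂ} (hX : X.PosSemidef)
    (hdiff : (ρ - X).PosSemidef) (hρQ : ρ * Q = 0) : X * Q = 0 := by
  ext i j
  have hv : ρ *ᵥ (fun k => Q k j) = 0 := by
    funext i'
    have := congrFun (congrFun hρQ i') j
    simpa [Matrix.mul_apply, mulVec, dotProduct] using this
  have h1 : star (fun k => Q k j) ⬝ᵥ ρ *ᵥ (fun k => Q k j) = 0 := by
    rw [hv, dotProduct_zero]
  have h2 : star (fun k => Q k j) ⬝ᵥ X *ᵥ (fun k => Q k j) = 0 := by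
    have hle := hdiff.dotProduct_mulVec_nonneg (fun k => Q k j)
    rw [sub_mulVec, dotProduct_sub, h1] at hle
    have hle' : star (fun k => Q k j) ⬝ᵥ X *ᵥ (fun k => Q k j) ≤ 0 := by
      rwa [zero_sub, neg_nonneg] at hle
    exact le_antisymm hle' (hX.dotProduct_mulVec_nonneg _)
  have h3 : X *ᵥ (fun k => Q k j) = 0 := (hX.dotProduct_mulVec_zero_iff _).mp h2
  have := congrFun h3 i
  simpa [Matrix.mul_apply, mulVec, dotProduct] using this

end GleasonAux

open GleasonAux

theorem bipartite_gleason_is_quantum (d : ℕ) (hd : 0 < d)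
    (X₁ X₂ A₁ A₂ : Type) [Fintype A₁] [Fintype A₂]
    (W : Matrix (Fin d × Fin d) (Fin d × Fin d) ℂ)
    (hherm : W.IsHermitian) (htr : W.trace = 1)
    (hblockpos : ∀ ψ φ : Fin d → ℂ,
      star ψ ⬝ᵥ ψ = 1 → star φ ⬝ᵥ φ = 1 →
      0 ≤ (star (fun p : Fin d × Fin d => ψ p.1 * φ p.2) ⬝ᵥ
            W.mulVec (fun p : Fin d × Fin d => ψ p.1 * φ p.2)).re)
    (M₁ : X₁ → A₁ → Matrix (Fin d) (Fin d) ℂ)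
    (M₂ : X₂ → A₂ → Matrix (Fin d) (Fin d) ℂ)
    (hM₁pos : ∀ x a, (M₁ x a).PosSemidef) (hM₁sum : ∀ x, ∑ a, M₁ x a = 1)
    (hM₂pos : ∀ x a, (M₂ x a).PosSemidef) (hM₂sum : ∀ x, ∑ a, M₂ x a = 1) :
    ∃ (Ψ : Fin d × Fin d → ℂ) (M₂' : X₂ → A₂ → Matrix (Fin d) (Fin d) ℂ),
      star Ψ ⬝ᵥ Ψ = 1 ∧
      (∀ x a, (M₂' x a).PosSemidef) ∧ (∀ x, ∑ a, M₂' x a = 1) ∧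
      ∀ (x₁ : X₁) (a₁ : A₁) (x₂ : X₂) (a₂ : A₂),
        (W * tens2 (M₁ x₁ a₁) (M₂ x₂ a₂)).trace =
          star Ψ ⬝ᵥ (tens2 (M₁ x₁ a₁) (M₂' x₂ a₂)).mulVec Ψ := by
  classical
  -- realness of quadratic forms of the Hermitian `W`
  have hreal : ∀ v : Fin d × Fin d → ℂ,
      star (star v ⬝ᵥ W *ᵥ v) = star v ⬝ᵥ W *ᵥ v := by
    intro v
    simp only [dotProduct, mulVec, star_sum, star_mul', star_star, Finset.mul_sum]
    refine Finset.sum_comm.trans (Finset.sum_congr rfl fun p _ =>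
      Finset.sum_congr rfl fun q _ => ?_)
    rw [hherm.apply]
    simp only [Pi.star_apply, star_star]
    ring
  -- positivity on (unnormalized) product vectors
  have hq : ∀ ψ φ : Fin d → ℂ,
      0 ≤ star (fun p : Fin d × Fin d => ψ p.1 * φ p.2) ⬝ᵥ
        W *ᵥ (fun p : Fin d × Fin d => ψ p.1 * φ p.2) := by
    intro ψ φ
    have him : (star (fun p : Fin d × Fin d => ψ p.1 * φ p.2) ⬝ᵥ
        W *ᵥ (fun p : Fin d × Fin d => ψ p.1 * φ p.2)).im = 0 :=
      Complex.conj_eq_iff_im.mp (hreal _)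
    rw [Complex.le_def]
    refine ⟨?_, by simp [him]⟩
    simp only [Complex.zero_re]
    by_cases hψ : ψ = 0
    · have : (fun p : Fin d × Fin d => ψ p.1 * φ p.2) = 0 := by
        funext p; simp [hψ]
      simp [this]
    by_cases hφ : φ = 0
    · have : (fun p : Fin d × Fin d => ψ p.1 * φ p.2) = 0 := by
        funext p; simp [hφ]
      simp [this]
    -- normalize
    set rψ : ℝ := ∑ i, Complex.normSq (ψ i) with hrψ
    set rφ : ℝ := ∑ i, Complex.normSq (φ i) with hrφ
    have hrψpos : 0 < rψ := by
      obtain ⟨i, hi⟩ := Function.ne_iff.mp hψ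
      refine Finset.sum_pos' (fun i _ => Complex.normSq_nonneg _) ⟨i, Finset.mem_univ i, ?_⟩
      exact Complex.normSq_pos.mpr hi
    have hrφpos : 0 < rφ := by
      obtain ⟨i, hi⟩ := Function.ne_iff.mp hφ
      refine Finset.sum_pos' (fun i _ => Complex.normSq_nonneg _) ⟨i, Finset.mem_univ i, ?_⟩
      exact Complex.normSq_pos.mpr hi
    set cψ : ℝ := (Real.sqrt rψ)⁻¹ with hcψ
    set cφ : ℝ := (Real.sqrt rφ)⁻¹ with hcφ
    have hsψ : 0 < Real.sqrt rψ := Real.sqrt_pos.mpr hrψpos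
    have hsφ : 0 < Real.sqrt rφ := Real.sqrt_pos.mpr hrφpos
    have hnorm : ∀ (χ : Fin d → ℂ) (r c : ℝ), (∑ i, Complex.normSq (χ i)) = r →
        c ^ 2 * r = 1 → star ((c : ℂ) • χ) ⬝ᵥ ((c : ℂ) • χ) = 1 := by
      intro χ r c hr hc
      have : star ((c : ℂ) • χ) ⬝ᵥ ((c : ℂ) • χ) = (c : ℂ) ^ 2 * (r : ℂ) := by
        rw [star_smul, smul_dotProduct, dotProduct_smul]
        have hdp : star χ ⬝ᵥ χ = (r : ℂ) := by
          rw [← hr]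
          simp only [dotProduct, Pi.star_apply, Complex.ofReal_sum]
          exact Finset.sum_congr rfl fun i _ => by
            rw [Complex.star_def, Complex.normSq_eq_conj_mul_self]
        rw [hdp]
        simp [Complex.star_def, Complex.conj_ofReal]
        ring
      rw [this]
      exact_mod_cast congrArg (fun t : ℝ => (t : ℂ)) hc
    have hcψ1 : cψ ^ 2 * rψ = 1 := by
      rw [hcψ, inv_pow, Real.sq_sqrt hrψpos.le]
      field_simp
    have hcφ1 : cφ ^ 2 * rφ = 1 := by
      rw [hcφ, inv_pow, Real.sq_sqrt hrφpos.le]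
      field_simp
    have hb := hblockpos ((cψ : ℂ) • ψ) ((cφ : ℂ) • φ)
      (hnorm ψ rψ cψ rfl hcψ1) (hnorm φ rφ cφ rfl hcφ1)
    -- relate the scaled quadratic form to the original one
    have hscale : (fun p : Fin d × Fin d => ((cψ : ℂ) • ψ) p.1 * ((cφ : ℂ) • φ) p.2) =
        ((cψ * cφ : ℝ) : ℂ) • (fun p : Fin d × Fin d => ψ p.1 * φ p.2) := by
      funext p
      simp [Complex.ofReal_mul]
      ring
    rw [hscale] at hb
    set v := fun p : Fin d × Fin d => ψ p.1 * φ p.2 with hv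
    have hsc : star (((cψ * cφ : ℝ) : ℂ) • v) ⬝ᵥ W *ᵥ (((cψ * cφ : ℝ) : ℂ) • v) =
        ((((cψ * cφ) ^ 2 : ℝ)) : ℂ) * (star v ⬝ᵥ W *ᵥ v) := by
      rw [star_smul, smul_dotProduct, mulVec_smul, dotProduct_smul]
      simp [Complex.star_def, Complex.conj_ofReal, smul_eq_mul]
      push_cast
      ring
    rw [hsc] at hb
    have hre : (((((cψ * cφ) ^ 2 : ℝ)) : ℂ) * (star v ⬝ᵥ W *ᵥ v)).re =
        ((cψ * cφ) ^ 2) * (star v ⬝ᵥ W *ᵥ v).re := by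
      rw [Complex.re_ofReal_mul]
    rw [hre] at hb
    have hpos2 : 0 < (cψ * cφ) ^ 2 := by positivity
    exact nonneg_of_mul_nonneg_right hb hpos2

  -- the reduced state on Alice's side
  have hρpsd : (NB W 1).PosSemidef := NB_psd W hherm hq 1 Matrix.PosSemidef.one
  have hρherm : (NB W 1).IsHermitian := hρpsd.1
  have hev : ∀ i, 0 ≤ hρherm.eigenvalues i := hρpsd.eigenvalues_nonneg
  set ρ : Matrix (Fin d) (Fin d) ℂ := NB W 1 with hρdef
  -- functional calculus pieces
  set S := fc hρherm Real.sqrt with hSdef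
  set g := fc hρherm (fun x => if x = 0 then 0 else (Real.sqrt x)⁻¹) with hgdef
  set Q := fc hρherm (fun x => if x = 0 then 1 else 0) with hQdef
  set P := fc hρherm (fun x => if x = 0 then 0 else 1) with hPdef
  have hSherm : S.IsHermitian := fc_herm hρherm _
  have hgherm : g.IsHermitian := fc_herm hρherm _
  have hQherm : Q.IsHermitian := fc_herm hρherm _
  have hQpsd : Q.PosSemidef := fc_psd hρherm _ (fun i => by by_cases h : hρherm.eigenvalues i = 0 <;> simp [h])
  have hSS : S * S = ρ := by
    rw [hSdef, fc_mul hρherm _ _ (fun x => x) (fun i => Real.mul_self_sqrt (hev i))]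
    exact fc_id hρherm
  have hSg : S * g = P := by
    refine fc_mul hρherm _ _ _ (fun i => ?_)
    by_cases h : hρherm.eigenvalues i = 0
    · simp [h]
    · have hs : Real.sqrt (hρherm.eigenvalues i) ≠ 0 :=
        Real.sqrt_ne_zero'.mpr (lt_of_le_of_ne (hev i) (Ne.symm h))
      simp [h, mul_inv_cancel₀ hs]
  have hgS : g * S = P := by
    refine fc_mul hρherm _ _ _ (fun i => ?_)
    by_cases h : hρherm.eigenvalues i = 0
    · simp [h]
    · have hs : Real.sqrt (hρherm.eigenvalues i) ≠ 0 :=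
        Real.sqrt_ne_zero'.mpr (lt_of_le_of_ne (hev i) (Ne.symm h))
      simp [h, inv_mul_cancel₀ hs]
  have hSQ : S * Q = 0 := by
    rw [hSdef, hQdef, fc_mul hρherm _ _ (fun _ => 0) (fun i => ?_), fc_zero]
    by_cases h : hρherm.eigenvalues i = 0 <;> simp [h]
  have hρQ : ρ * Q = 0 := by
    rw [← fc_id hρherm, hQdef,
      fc_mul hρherm _ _ (fun _ => 0) (fun i => ?_), fc_zero]
    by_cases h : hρherm.eigenvalues i = 0 <;> simp [h]
  have hgρg : g * ρ * g = P := by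
    rw [← fc_id hρherm, hgdef,
      fc_mul hρherm _ _ (fun x => if x = 0 then 0 else (Real.sqrt x)⁻¹ * x) (fun i => ?_),
      fc_mul hρherm _ _ (fun x => if x = 0 then 0 else 1) (fun i => ?_)]
    · by_cases h : hρherm.eigenvalues i = 0
      · simp [h]
      · have hs : Real.sqrt (hρherm.eigenvalues i) ≠ 0 :=
          Real.sqrt_ne_zero'.mpr (lt_of_le_of_ne (hev i) (Ne.symm h))
        have hmm : (Real.sqrt (hρherm.eigenvalues i))⁻¹ * hρherm.eigenvalues i *
            (Real.sqrt (hρherm.eigenvalues i))⁻¹ =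
            (Real.sqrt (hρherm.eigenvalues i) * Real.sqrt (hρherm.eigenvalues i))⁻¹ *
            hρherm.eigenvalues i := by
          rw [mul_inv]; ring
        simp only [h, if_false]
        rw [hmm, Real.mul_self_sqrt (hev i), inv_mul_cancel₀ h]
    · by_cases h : hρherm.eigenvalues i = 0 <;> simp [h]
  have hPQ : P + Q = 1 := by
    rw [hPdef, hQdef, fc_add hρherm _ _ (fun _ => 1) (fun i => ?_), fc_one]
    by_cases h : hρherm.eigenvalues i = 0 <;> simp [h]
  have hPeq : P = 1 - Q := by rw [← hPQ]; abel
  -- facts about each NB W (M₂ x a)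
  have hX : ∀ x a, (NB W (M₂ x a)).PosSemidef := fun x a => NB_psd W hherm hq _ (hM₂pos x a)
  have hdiff : ∀ x a, (ρ - NB W (M₂ x a)).PosSemidef := by
    intro x a
    have hcompl : (1 - M₂ x a).PosSemidef := by
      have h1 : M₂ x a + ∑ a' ∈ Finset.univ.erase a, M₂ x a' = 1 := by
        rw [Finset.add_sum_erase Finset.univ (M₂ x) (Finset.mem_univ a)]
        exact hM₂sum x
      have : (1 : Matrix (Fin d) (Fin d) ℂ) - M₂ x a = ∑ a' ∈ Finset.univ.erase a, M₂ x a' := by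
        rw [← h1]; abel
      rw [this]
      exact psd_sum (hM₂pos x) _
    have hsplit : ρ - NB W (M₂ x a) = NB W (1 - M₂ x a) := by
      have := NB_add W (1 - M₂ x a) (M₂ x a)
      rw [sub_add_cancel] at this
      rw [hρdef, this]; abel
    rw [hsplit]
    exact NB_psd W hherm hq _ hcompl
  have hXQ : ∀ x a, NB W (M₂ x a) * Q = 0 := fun x a =>
    support_lemma (hX x a) (hdiff x a) hρQ
  have hQX : ∀ x a, Q * NB W (M₂ x a) = 0 := by
    intro x a
    have := congrArg conjTranspose (hXQ x a)
    rwa [conjTranspose_mul, (hX x a).1, hQherm, conjTranspose_zero] at this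
  have hPXP : ∀ x a, P * NB W (M₂ x a) * P = NB W (M₂ x a) := by
    intro x a
    rw [hPeq, Matrix.sub_mul, Matrix.one_mul, hQX, sub_zero,
      Matrix.mul_sub, Matrix.mul_one, hXQ, sub_zero]
  -- the new POVM
  set M2' : X₂ → A₂ → Matrix (Fin d) (Fin d) ℂ := fun x a =>
    (g * NB W (M₂ x a) * g + (((M₂ x a).trace) * ((d : ℂ))⁻¹) • Q)ᵀ with hM2'def
  have hdinv : (0 : ℂ) ≤ ((d : ℂ))⁻¹ := by
    have h1 : ((( (d : ℝ))⁻¹ : ℝ) : ℂ) = ((d : ℂ))⁻¹ := by push_cast; ring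
    rw [← h1]
    rw [Complex.le_def]
    constructor
    · simp only [Complex.zero_re, Complex.ofReal_re]
      positivity
    · simp
  refine ⟨fun p => S p.1 p.2, M2', ?_, ?_, ?_, ?_⟩
  · rw [norm_eq S hSherm, hSS, hρdef, NB_one_trace, htr]
  · intro x a
    have hgXg : (g * NB W (M₂ x a) * g).PosSemidef := by
      have h := (hX x a).mul_mul_conjTranspose_same g
      rwa [hgherm] at h
    have hc : (0 : ℂ) ≤ (M₂ x a).trace * ((d : ℂ))⁻¹ :=
      mul_nonneg (psd_trace_nonneg (hM₂pos x a)) hdinv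
    exact (hgXg.add (psd_smul hQpsd hc)).transpose
  · intro x
    rw [hM2'def]
    have h1 : ∑ a, (g * NB W (M₂ x a) * g + (((M₂ x a).trace) * ((d : ℂ))⁻¹) • Q)ᵀ =
        (∑ a, (g * NB W (M₂ x a) * g + (((M₂ x a).trace) * ((d : ℂ))⁻¹) • Q))ᵀ := by
      rw [Matrix.transpose_sum]
    rw [h1, Finset.sum_add_distrib]
    have h2 : ∑ a, g * NB W (M₂ x a) * g = g * ρ * g := by
      rw [← Finset.sum_mul, ← Finset.mul_sum, ← NB_sum, hM₂sum, ← hρdef]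
    have h3 : ∑ a, (((M₂ x a).trace) * ((d : ℂ))⁻¹) • Q = (1 : ℂ) • Q := by
      rw [← Finset.sum_smul]
      congr 1
      rw [← Finset.sum_mul, ← Matrix.trace_sum, hM₂sum, Matrix.trace_one]
      simp only [Fintype.card_fin]
      exact mul_inv_cancel₀ (Nat.cast_ne_zero.mpr hd.ne')
    rw [h2, h3, hgρg, one_smul, hPQ, Matrix.transpose_one]
  · intro x₁ a₁ x₂ a₂
    rw [trace_eq W (M₁ x₁ a₁) (M₂ x₂ a₂)]
    have hst := state_eq S (M₁ x₁ a₁) (M2' x₂ a₂) hSherm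
    rw [show (tens2 (M₁ x₁ a₁) (M2' x₂ a₂)).mulVec (fun p : Fin d × Fin d => S p.1 p.2)
        = (tens2 (M₁ x₁ a₁) (M2' x₂ a₂)) *ᵥ (fun p : Fin d × Fin d => S p.1 p.2) from rfl,
      hst, hM2'def, transpose_transpose]
    have hPXPi := hPXP x₂ a₂
    set A := M₁ x₁ a₁
    set X := NB W (M₂ x₂ a₂) with hXdef
    set c := ((M₂ x₂ a₂).trace) * ((d : ℂ))⁻¹ with hcdef
    have e0 : S * A * S * (g * X * g + c • Q) =
        S * A * S * (g * X * g) + c • (S * A * S * Q) := by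
      rw [Matrix.mul_add, Matrix.mul_smul]
    rw [e0, trace_add, trace_smul]
    have e1 : S * A * S * Q = 0 := by
      rw [Matrix.mul_assoc (S * A) S Q, hSQ, Matrix.mul_zero]
    rw [e1, trace_zero, smul_zero, add_zero]
    have e2 : S * A * S * (g * X * g) = S * A * (S * g) * X * g := by
      simp only [Matrix.mul_assoc]
    rw [e2, trace_mul_comm (S * A * (S * g) * X) g]
    have e3 : g * (S * A * (S * g) * X) = (g * S) * A * (S * g) * X := by
      simp only [Matrix.mul_assoc]
    rw [e3, hSg, hgS]
    have e4 : P * A * P * X = P * (A * P * X) := by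
      simp only [Matrix.mul_assoc]
    rw [e4, trace_mul_comm P (A * P * X)]
    have e5 : A * P * X * P = A * (P * X * P) := by
      simp only [Matrix.mul_assoc]
    rw [e5, hPXPi]
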